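/- There exists a surjective group homomorphism from the Baumslag–Solitar group BS(2,3) onto ℤ[1/6] ⋊_{3/2} ℤ sending the generator a to the element (1, 0) and the generator t to the element (0, 1). -/

import Mathlib

/-- The relator of the Baumslag–Solitar group `BS(2,3) = ⟨a, t ∣ t a² t⁻¹ a⁻³⟩`,
with `a = FreeGroup.of 0` and `t = FreeGroup.of 1`. -/
def bsRels : Set (FreeGroup (Fin 2)) :=
  {FreeGroup.of 1 * FreeGroup.of 0 ^ 2 * (FreeGroup.of 1)⁻¹ * (FreeGroup.of 0 ^ 3)⁻¹}

/-- The Baumslag–Solitar group `BS(2,3)`. -/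
abbrev BS23 : Type := PresentedGroup bsRels

/-- The additive group `ℤ[1/6] = {m / 6^k : m ∈ ℤ, k ≥ 0} ⊆ ℚ`. -/
def Zinv6 : AddSubgroup ℚ where
  carrier := {q : ℚ | ∃ (m : ℤ) (k : ℕ), q = m / 6 ^ k}
  zero_mem' := ⟨0, 0, by norm_num⟩
  add_mem' := by
    rintro a b ⟨m, k, rfl⟩ ⟨m', k', rfl⟩
    refine ⟨m * 6 ^ k' + m' * 6 ^ k, k + k', ?_⟩
    have h1 : ((6 : ℚ)) ^ k ≠ 0 := by positivity
    have h2 : ((6 : ℚ)) ^ k' ≠ 0 := by positivity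
    push_cast
    field_simp [pow_add]
    ring
  neg_mem' := by
    rintro a ⟨m, k, rfl⟩
    exact ⟨-m, k, by push_cast; ring⟩

lemma mul_three_halves_mem {q : ℚ} (hq : q ∈ Zinv6) : (3 / 2 : ℚ) * q ∈ Zinv6 := by
  obtain ⟨m, k, rfl⟩ := hq
  refine ⟨9 * m, k + 1, ?_⟩
  have h6 : ((6 : ℚ)) ≠ 0 := by norm_num
  push_cast
  field_simp
  ring

lemma mul_two_thirds_mem {q : ℚ} (hq : q ∈ Zinv6) : (2 / 3 : ℚ) * q ∈ Zinv6 := by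
  obtain ⟨m, k, rfl⟩ := hq
  refine ⟨4 * m, k + 1, ?_⟩
  have h6 : ((6 : ℚ)) ≠ 0 := by norm_num
  push_cast
  field_simp
  ring

/-- Multiplication by `3/2` as an additive automorphism of `ℤ[1/6]`. -/
def threeHalves : Zinv6 ≃+ Zinv6 where
  toFun q := ⟨(3 / 2 : ℚ) * q, mul_three_halves_mem q.2⟩
  invFun q := ⟨(2 / 3 : ℚ) * q, mul_two_thirds_mem q.2⟩
  left_inv q := by ext; simp; ring_nf
  right_inv q := by ext; simp; ring_nf
  map_add' a b := by ext; simp [mul_add]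

/-- The semidirect product `ℤ[1/6] ⋊_{3/2} ℤ`, where the generator `1 ∈ ℤ` acts on
`ℤ[1/6]` by multiplication by `3/2`. -/
abbrev Z16Rtimes : Type :=
  SemidirectProduct (Multiplicative Zinv6) (Multiplicative ℤ)
    (zpowersHom (MulAut (Multiplicative Zinv6)) (AddEquiv.toMultiplicative threeHalves))

lemma one_mem_Zinv6 : (1 : ℚ) ∈ Zinv6 := ⟨1, 0, by norm_num⟩


section BS23Aux

noncomputable abbrev eTH : MulAut (Multiplicative Zinv6) := AddEquiv.toMultiplicative threeHalves

lemma eTH_apply (x : Multiplicative Zinv6) :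
    ((eTH x).toAdd : ℚ) = (3/2 : ℚ) * (x.toAdd : ℚ) := rfl

lemma eTH_inv_apply (x : Multiplicative Zinv6) :
    ((eTH⁻¹ x).toAdd : ℚ) = (2/3 : ℚ) * (x.toAdd : ℚ) := rfl

lemma eTH_zpow (j : ℤ) (x : Multiplicative Zinv6) :
    (((eTH ^ j) x).toAdd : ℚ) = (3/2 : ℚ) ^ j * (x.toAdd : ℚ) := by
  induction j using Int.induction_on generalizing x with
  | zero => simp
  | succ n ih =>
      rw [zpow_add_one, MulAut.mul_apply, ih, eTH_apply,
        zpow_add_one₀ (by norm_num : (3/2:ℚ) ≠ 0)]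
      ring
  | pred n ih =>
      rw [zpow_sub_one, MulAut.mul_apply, ih, eTH_inv_apply,
        zpow_sub_one₀ (by norm_num : (3/2:ℚ) ≠ 0)]
      field_simp

open SemidirectProduct Multiplicative

lemma mval_inj : Function.Injective (fun z : Multiplicative Zinv6 => ((z.toAdd : Zinv6) : ℚ)) :=
  fun _ _ h => Multiplicative.toAdd.injective (Subtype.ext h)

def Fgen : Fin 2 → Z16Rtimes :=
  ![inl (ofAdd (⟨1, one_mem_Zinv6⟩ : Zinv6)), inr (ofAdd (1 : ℤ))]

lemma isCoprime94 (k : ℕ) : IsCoprime ((9:ℤ)^k) ((4:ℤ)^k) :=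
  (Int.isCoprime_iff_gcd_eq_one.mpr (by norm_num)).pow

end BS23Aux

open SemidirectProduct Multiplicative in
set_option maxHeartbeats 1600000 in
/-- There is a surjection `BS(2,3) ↠ ℤ[1/6] ⋊_{3/2} ℤ` sending `a ↦ (1, 0)` and
`t ↦ (0, 1)`. -/
theorem bs23_surjects_onto_z16_rtimes :
    ∃ f : BS23 →* Z16Rtimes,
      Function.Surjective f ∧
      f (PresentedGroup.of 0)
        = SemidirectProduct.inl (Multiplicative.ofAdd (⟨1, one_mem_Zinv6⟩ : Zinv6)) ∧
      f (PresentedGroup.of 1)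
        = SemidirectProduct.inr (Multiplicative.ofAdd (1 : ℤ)) := by
  have relcheck : ∀ r ∈ bsRels, FreeGroup.lift Fgen r = 1 := by
    rintro r hr
    rw [bsRels, Set.mem_singleton_iff] at hr
    subst hr
    simp only [map_mul, map_pow, map_inv, FreeGroup.lift_apply_of, Fgen, Matrix.cons_val_zero,
      Matrix.cons_val_one, Matrix.head_cons]
    rw [← map_pow (SemidirectProduct.inl (φ := _) : Multiplicative Zinv6 →* Z16Rtimes),
      ← map_pow (SemidirectProduct.inl (φ := _) : Multiplicative Zinv6 →* Z16Rtimes),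
      ← map_inv (SemidirectProduct.inr (φ := _) : Multiplicative ℤ →* Z16Rtimes),
      ← inl_aut,
      ← map_inv (SemidirectProduct.inl (φ := _) : Multiplicative Zinv6 →* Z16Rtimes),
      ← map_mul]
    have harg : (zpowersHom (MulAut (Multiplicative Zinv6)) eTH) (ofAdd 1)
          ((ofAdd (⟨1, one_mem_Zinv6⟩ : Zinv6)) ^ 2) *
        ((ofAdd (⟨1, one_mem_Zinv6⟩ : Zinv6)) ^ 3)⁻¹ = 1 := by
      apply mval_inj
      have := eTH_zpow 1 (ofAdd (⟨1, one_mem_Zinv6⟩ : Zinv6) ^ 2)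
      simp only [zpowersHom_apply, toAdd_ofAdd]
      simp only [toAdd_mul, toAdd_inv, toAdd_pow, toAdd_ofAdd] at this ⊢
      push_cast [this]
      norm_num
    rw [harg, map_one]
  set f := PresentedGroup.toGroup relcheck with hfdef
  have hf0 : f (PresentedGroup.of 0) = inl (ofAdd (⟨1, one_mem_Zinv6⟩ : Zinv6)) := by
    rw [hfdef, PresentedGroup.toGroup.of]; rfl
  have hf1 : f (PresentedGroup.of 1) = inr (ofAdd (1 : ℤ)) := by
    rw [hfdef, PresentedGroup.toGroup.of]; rfl
  have hα : (inl (ofAdd (⟨1, one_mem_Zinv6⟩ : Zinv6)) : Z16Rtimes) ∈ f.range :=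
    ⟨PresentedGroup.of 0, hf0⟩
  have hτ : ∀ n : ℤ, (inr (ofAdd n) : Z16Rtimes) ∈ f.range := by
    intro n
    have h1 : (inr (ofAdd (1:ℤ)) : Z16Rtimes) ∈ f.range := ⟨PresentedGroup.of 1, hf1⟩
    have h2 := zpow_mem h1 n
    rwa [← map_zpow, show (ofAdd (1:ℤ)) ^ n = ofAdd n by
      rw [← ofAdd_zsmul]; norm_num] at h2
  have hy : ∀ j : ℤ, (inl ((eTH ^ j) (ofAdd (⟨1, one_mem_Zinv6⟩ : Zinv6))) : Z16Rtimes)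
      ∈ f.range := by
    intro j
    have h3 : (inl ((zpowersHom (MulAut (Multiplicative Zinv6)) eTH) (ofAdd j)
          (ofAdd (⟨1, one_mem_Zinv6⟩ : Zinv6))) : Z16Rtimes)
        = inr (ofAdd j) * inl (ofAdd (⟨1, one_mem_Zinv6⟩ : Zinv6)) * (inr (ofAdd j))⁻¹ := by
      rw [inl_aut, map_inv]
    rw [zpowersHom_apply, toAdd_ofAdd] at h3
    rw [h3]
    exact mul_mem (mul_mem (hτ j) hα) (inv_mem (hτ j))
  have hA : ∀ x : Zinv6, (inl (ofAdd x) : Z16Rtimes) ∈ f.range := by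
    intro x
    obtain ⟨m, k, hx⟩ := x.2
    obtain ⟨a, b, hab⟩ := isCoprime94 k
    set y : ℤ → Zinv6 := fun j => ((eTH ^ j) (ofAdd (⟨1, one_mem_Zinv6⟩ : Zinv6))).toAdd with hy'
    have hyval : ∀ j, ((y j : Zinv6) : ℚ) = (3/2:ℚ)^j := by
      intro j
      have := eTH_zpow j (ofAdd (⟨1, one_mem_Zinv6⟩ : Zinv6))
      simpa [hy'] using this
    have hxeq : x = (m*a) • y k + (m*b) • y (-k) := by
      apply Subtype.ext
      push_cast [hyval, hx]
      simp only [zsmul_eq_mul, zpow_neg, zpow_natCast]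
      have h2 : ((2:ℚ))^k ≠ 0 := by positivity
      have h3 : ((3:ℚ))^k ≠ 0 := by positivity
      have h6 : ((6:ℚ))^k ≠ 0 := by positivity
      have habq : (a:ℚ) * 9^k + b * 4^k = 1 := by exact_mod_cast congrArg (Int.cast : ℤ → ℚ) hab
      have h9 : ((9:ℚ))^k = 3^k * 3^k := by rw [← mul_pow]; norm_num
      have h4 : ((4:ℚ))^k = 2^k * 2^k := by rw [← mul_pow]; norm_num
      have h66 : ((6:ℚ))^k = 2^k * 3^k := by rw [← mul_pow]; norm_num
      simp only [div_pow, Int.cast_mul]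
      field_simp
      linear_combination (-(m:ℚ)*6^k)*habq + ((m:ℚ)*a*6^k)*h9 + ((m:ℚ)*b*6^k)*h4 + (-(m:ℚ))*h66
    rw [hxeq, ofAdd_add, map_mul, ofAdd_zsmul, ofAdd_zsmul, map_zpow, map_zpow]
    simp only [hy', ofAdd_toAdd]
    exact mul_mem (zpow_mem (hy k) _) (zpow_mem (hy (-k)) _)
  refine ⟨f, ?_, hf0, hf1⟩
  intro z
  have hz : z ∈ f.range := by
    rw [← inl_left_mul_inr_right z]
    refine mul_mem ?_ ?_
    · have := hA z.left.toAdd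
      rwa [ofAdd_toAdd] at this
    · have := hτ z.right.toAdd
      rwa [ofAdd_toAdd] at this
  exact hz
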